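/- arXiv:1609.00015 — 6 statements merged into one kernel-verified Lean document; each statement's English description precedes it below -/
import Mathlib

section
/- Let H be a finite-dimensional complex inner product space, let U, W, V be unitary operators on H, let {e_i} be an orthonormal eigenbasis of W with eigenvalues μ_i and {f_k} an orthonormal eigenbasis of V with eigenvalues ν_k, and let ρ be a density operator on H. Define F : ℝ × ℝ → ℂ by F(β, β') := Σ_{i₂,i₃,k₁,k₂} exp( −( β · conj(μ_{i₃}) · conj(ν_{k₂}) + β' · μ_{i₂} · ν_{k₁} ) ) · Ã_ρ(i₂,i₃,k₁,k₂), i.e. the average ⟨e^{−(βW + β'W')}⟩ of the random variables W := w₃* v₂* and W' := w₂ v₁ under the complex distribution P(W,W') built from the combined quantum amplitudes Ã_ρ. Then the mixed partial derivative ∂²F/∂β∂β' evaluated at β = β' = 0 equals the out-of-time-ordered correlator C := Tr(ρ ∘ W(t)† ∘ V† ∘ W(t) ∘ V), where W(t) := U† ∘ W ∘ U. (Jarzynski-like equality for the OTOC.) -/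
open scoped InnerProductSpace
open ContinuousLinearMap

private lemma trace_eq_sum_inner' {H : Type*} [NormedAddCommGroup H] [InnerProductSpace ℂ H]
    [FiniteDimensional ℂ H] {K : Type*} [Fintype K] (f : OrthonormalBasis K ℂ H)
    (T : H →L[ℂ] H) :
    LinearMap.trace ℂ H T.toLinearMap = ∑ k, ⟪f k, T (f k)⟫_ℂ := by
  classical
  rw [LinearMap.trace_eq_matrix_trace ℂ f.toBasis]
  simp [Matrix.trace, Matrix.diag, LinearMap.toMatrix_apply, OrthonormalBasis.coe_toBasis,
    OrthonormalBasis.coe_toBasis_repr_apply, OrthonormalBasis.repr_apply_apply]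

private lemma hasDerivAt_exp_term (a b c : ℂ) (x : ℝ) :
    HasDerivAt (fun β' : ℝ => Complex.exp (-(a + (β' : ℂ) * b)) * c)
      (Complex.exp (-(a + (x : ℂ) * b)) * (-b) * c) x := by
  have h1 : HasDerivAt (fun z : ℂ => -(a + z * b)) (-b) (x : ℂ) := by
    exact (((hasDerivAt_id' (x : ℂ)).mul_const b).const_add a).fun_neg.congr_deriv (by ring)
  have h2 : HasDerivAt (fun z : ℂ => Complex.exp (-(a + z * b)))
      (Complex.exp (-(a + (x : ℂ) * b)) * (-b)) (x : ℂ) :=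
    (Complex.hasDerivAt_exp _).comp _ h1
  exact (h2.comp_ofReal).mul_const c

/-- **Jarzynski-like equality for the out-of-time-ordered correlator.**
The mixed partial derivative `∂²/∂β∂β'` of
`F(β,β') = ⟨exp(−(βW + β'W'))⟩ = ∑ exp(−(β·conj(μ i₃)·conj(ν k₂) + β'·μ i₂·ν k₁)) · Ã_ρ`
evaluated at `β = β' = 0` equals the OTOC `Tr(ρ ∘ W(t)† ∘ V† ∘ W(t) ∘ V)`,
where `W(t) = U† ∘ W ∘ U`. -/
theorem jarzynski_like_equality_for_OTOC
    {H : Type*} [NormedAddCommGroup H] [InnerProductSpace ℂ H] [FiniteDimensional ℂ H]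
    {I K : Type*} [Fintype I] [Fintype K]
    (U W V ρ : H →L[ℂ] H)
    (hU : U ∈ unitary (H →L[ℂ] H))
    (hW : W ∈ unitary (H →L[ℂ] H))
    (hV : V ∈ unitary (H →L[ℂ] H))
    (e : OrthonormalBasis I ℂ H) (f : OrthonormalBasis K ℂ H)
    (μ : I → ℂ) (ν : K → ℂ)
    (hWe : ∀ i, W (e i) = μ i • e i)
    (hVf : ∀ k, V (f k) = ν k • f k)
    (hρpos : ρ.IsPositive)
    (hρtr : LinearMap.trace ℂ H ρ.toLinearMap = 1)
    (F : ℝ → ℝ → ℂ)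
    (hF : ∀ β β' : ℝ,
      F β β' = ∑ i₂ : I, ∑ i₃ : I, ∑ k₁ : K, ∑ k₂ : K,
        Complex.exp (-((β : ℂ) * (starRingEnd ℂ) (μ i₃) * (starRingEnd ℂ) (ν k₂)
            + (β' : ℂ) * μ i₂ * ν k₁)) *
          (⟪e i₃, U (f k₂)⟫_ℂ * ⟪f k₂, (adjoint U) (e i₂)⟫_ℂ *
           ⟪e i₂, U (f k₁)⟫_ℂ * ⟪f k₁, ρ ((adjoint U) (e i₃))⟫_ℂ)) :
    deriv (fun β : ℝ => deriv (fun β' : ℝ => F β β') 0) 0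
      = LinearMap.trace ℂ H
          ((ρ ∘L adjoint (adjoint U ∘L W ∘L U) ∘L adjoint V ∘L
            (adjoint U ∘L W ∘L U) ∘L V).toLinearMap) := by
  classical
  set A : I → K → ℂ := fun i k => (starRingEnd ℂ) (μ i) * (starRingEnd ℂ) (ν k) with hA
  set B : I → K → ℂ := fun i k => μ i * ν k with hB
  set c : I → I → K → K → ℂ := fun i₂ i₃ k₁ k₂ =>
    ⟪e i₃, U (f k₂)⟫_ℂ * ⟪f k₂, (adjoint U) (e i₂)⟫_ℂ *
      ⟪e i₂, U (f k₁)⟫_ℂ * ⟪f k₁, ρ ((adjoint U) (e i₃))⟫_ℂ with hc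
  -- Step 1: inner derivative
  have key1 : ∀ β : ℝ, deriv (fun β' : ℝ => F β β') 0
      = ∑ i₂ : I, ∑ i₃ : I, ∑ k₁ : K, ∑ k₂ : K,
          Complex.exp (-((β : ℂ) * A i₃ k₂)) * (-(B i₂ k₁)) * c i₂ i₃ k₁ k₂ := by
    intro β
    have hfun : (fun β' : ℝ => F β β')
        = fun β' : ℝ => ∑ i₂ : I, ∑ i₃ : I, ∑ k₁ : K, ∑ k₂ : K,
            Complex.exp (-((β : ℂ) * A i₃ k₂ + (β' : ℂ) * B i₂ k₁)) * c i₂ i₃ k₁ k₂ := by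
      funext β'
      rw [hF]
      simp only [hA, hB, hc, mul_assoc]
    rw [hfun]
    have hd : HasDerivAt (fun β' : ℝ => ∑ i₂ : I, ∑ i₃ : I, ∑ k₁ : K, ∑ k₂ : K,
        Complex.exp (-((β : ℂ) * A i₃ k₂ + (β' : ℂ) * B i₂ k₁)) * c i₂ i₃ k₁ k₂)
        (∑ i₂ : I, ∑ i₃ : I, ∑ k₁ : K, ∑ k₂ : K,
          Complex.exp (-((β : ℂ) * A i₃ k₂ + ((0 : ℝ) : ℂ) * B i₂ k₁)) * (-(B i₂ k₁))
            * c i₂ i₃ k₁ k₂) 0 := by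
      refine HasDerivAt.fun_sum fun i₂ _ => HasDerivAt.fun_sum fun i₃ _ =>
        HasDerivAt.fun_sum fun k₁ _ => HasDerivAt.fun_sum fun k₂ _ => ?_
      exact hasDerivAt_exp_term _ _ _ 0
    rw [hd.deriv]
    simp
  -- Step 2: outer derivative
  have key2 : deriv (fun β : ℝ => deriv (fun β' : ℝ => F β β') 0) 0
      = ∑ i₂ : I, ∑ i₃ : I, ∑ k₁ : K, ∑ k₂ : K,
          A i₃ k₂ * B i₂ k₁ * c i₂ i₃ k₁ k₂ := by
    have hfun : (fun β : ℝ => deriv (fun β' : ℝ => F β β') 0)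
        = fun β : ℝ => ∑ i₂ : I, ∑ i₃ : I, ∑ k₁ : K, ∑ k₂ : K,
            Complex.exp (-((0 : ℂ) + (β : ℂ) * A i₃ k₂)) * ((-(B i₂ k₁)) * c i₂ i₃ k₁ k₂) := by
      funext β
      rw [key1 β]
      simp [mul_assoc]
    rw [hfun]
    have hd : HasDerivAt (fun β : ℝ => ∑ i₂ : I, ∑ i₃ : I, ∑ k₁ : K, ∑ k₂ : K,
        Complex.exp (-((0 : ℂ) + (β : ℂ) * A i₃ k₂)) * ((-(B i₂ k₁)) * c i₂ i₃ k₁ k₂))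
        (∑ i₂ : I, ∑ i₃ : I, ∑ k₁ : K, ∑ k₂ : K,
          Complex.exp (-((0 : ℂ) + ((0 : ℝ) : ℂ) * A i₃ k₂)) * (-(A i₃ k₂))
            * ((-(B i₂ k₁)) * c i₂ i₃ k₁ k₂)) 0 := by
      refine HasDerivAt.fun_sum fun i₂ _ => HasDerivAt.fun_sum fun i₃ _ =>
        HasDerivAt.fun_sum fun k₁ _ => HasDerivAt.fun_sum fun k₂ _ => ?_
      exact hasDerivAt_exp_term _ _ _ 0
    rw [hd.deriv]
    refine Finset.sum_congr rfl fun i₂ _ => Finset.sum_congr rfl fun i₃ _ =>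
      Finset.sum_congr rfl fun k₁ _ => Finset.sum_congr rfl fun k₂ _ => ?_
    simp
    ring
  rw [key2]
  -- Step 3: the trace side
  have hWadj : ∀ i, (adjoint W) (e i) = (starRingEnd ℂ) (μ i) • e i := by
    intro i
    refine ext_inner_left ℂ fun v => ?_
    rw [adjoint_inner_right]
    conv_lhs => rw [← e.sum_repr' v]
    simp [map_sum, hWe, sum_inner, inner_smul_left, inner_smul_right,
      orthonormal_iff_ite.mp e.orthonormal, mul_comm]
  have hVadj : ∀ k, (adjoint V) (f k) = (starRingEnd ℂ) (ν k) • f k := by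
    intro k
    refine ext_inner_left ℂ fun v => ?_
    rw [adjoint_inner_right]
    conv_lhs => rw [← f.sum_repr' v]
    simp [map_sum, hVf, sum_inner, inner_smul_left, inner_smul_right,
      orthonormal_iff_ite.mp f.orthonormal, mul_comm]
  have hAop_apply : ∀ x : H, (adjoint U ∘L W ∘L U) x
      = ∑ i, (μ i * ⟪e i, U x⟫_ℂ) • (adjoint U) (e i) := by
    intro x
    show (adjoint U) (W (U x)) = _
    conv_lhs => rw [← e.sum_repr' (U x)]
    simp [map_sum, hWe, smul_smul, mul_comm]
  have hAdag_apply : ∀ x : H, (adjoint (adjoint U ∘L W ∘L U)) x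
      = ∑ i, ((starRingEnd ℂ) (μ i) * ⟪e i, U x⟫_ℂ) • (adjoint U) (e i) := by
    intro x
    rw [adjoint_comp, adjoint_comp, adjoint_adjoint]
    show (adjoint U) ((adjoint W) (U x)) = _
    conv_lhs => rw [← e.sum_repr' (U x)]
    simp [map_sum, hWadj, smul_smul, mul_comm]
  have hVadj_apply : ∀ x : H, (adjoint V) x
      = ∑ k, ((starRingEnd ℂ) (ν k) * ⟪f k, x⟫_ℂ) • f k := by
    intro x
    conv_lhs => rw [← f.sum_repr' x]
    simp [map_sum, hVadj, smul_smul, mul_comm]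
  rw [trace_eq_sum_inner' f]
  have hterm : ∀ k₁ : K,
      ⟪f k₁, (ρ ∘L adjoint (adjoint U ∘L W ∘L U) ∘L adjoint V ∘L
          (adjoint U ∘L W ∘L U) ∘L V) (f k₁)⟫_ℂ
        = ∑ i₃ : I, ∑ k₂ : K, ∑ i₂ : I,
            A i₃ k₂ * B i₂ k₁ * c i₂ i₃ k₁ k₂ := by
    intro k₁
    have : (ρ ∘L adjoint (adjoint U ∘L W ∘L U) ∘L adjoint V ∘L
        (adjoint U ∘L W ∘L U) ∘L V) (f k₁)
        = ρ ((adjoint (adjoint U ∘L W ∘L U)) ((adjoint V)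
            ((adjoint U ∘L W ∘L U) (V (f k₁))))) := rfl
    rw [this, hVf]
    simp only [map_smul, hAop_apply, map_sum, hVadj_apply, hAdag_apply, Finset.smul_sum,
      smul_smul, inner_sum, inner_smul_right, smul_eq_mul, Finset.mul_sum, Finset.sum_mul]
    refine Finset.sum_congr rfl fun i₃ _ => Finset.sum_congr rfl fun k₂ _ =>
      Finset.sum_congr rfl fun i₂ _ => ?_
    simp only [hA, hB, hc]
    ring
  rw [Finset.sum_congr rfl fun k₁ _ => hterm k₁]
  -- reorder sums
  calc ∑ i₂ : I, ∑ i₃ : I, ∑ k₁ : K, ∑ k₂ : K, A i₃ k₂ * B i₂ k₁ * c i₂ i₃ k₁ k₂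
      = ∑ i₃ : I, ∑ i₂ : I, ∑ k₁ : K, ∑ k₂ : K, A i₃ k₂ * B i₂ k₁ * c i₂ i₃ k₁ k₂ :=
        Finset.sum_comm
    _ = ∑ i₃ : I, ∑ k₁ : K, ∑ i₂ : I, ∑ k₂ : K, A i₃ k₂ * B i₂ k₁ * c i₂ i₃ k₁ k₂ :=
        Finset.sum_congr rfl fun i₃ _ => Finset.sum_comm
    _ = ∑ i₃ : I, ∑ k₁ : K, ∑ k₂ : K, ∑ i₂ : I, A i₃ k₂ * B i₂ k₁ * c i₂ i₃ k₁ k₂ :=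
        Finset.sum_congr rfl fun i₃ _ => Finset.sum_congr rfl fun k₁ _ => Finset.sum_comm
    _ = ∑ k₁ : K, ∑ i₃ : I, ∑ k₂ : K, ∑ i₂ : I, A i₃ k₂ * B i₂ k₁ * c i₂ i₃ k₁ k₂ :=
        Finset.sum_comm
end

section
/- Let H be a finite-dimensional complex inner product space, let U, W, V be unitary operators on H, let {e_i} be an orthonormal eigenbasis of W with eigenvalues μ_i and {f_k} an orthonormal eigenbasis of V with eigenvalues ν_k, and let ρ be a density operator on H. Then the first mixed moment of the combined quantum amplitudes equals the out-of-time-ordered correlator: Σ_{i₂,i₃,k₁,k₂} conj(μ_{i₃}) · conj(ν_{k₂}) · μ_{i₂} · ν_{k₁} · Ã_ρ(i₂,i₃,k₁,k₂) = Tr(ρ ∘ W(t)† ∘ V† ∘ W(t) ∘ V), where W(t) := U† ∘ W ∘ U. -/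
set_option maxHeartbeats 1000000

open scoped InnerProductSpace
open ContinuousLinearMap

private lemma collapse_aux {H : Type*} [NormedAddCommGroup H] [InnerProductSpace ℂ H]
    [FiniteDimensional ℂ H] {ι : Type*} [Fintype ι] (b : OrthonormalBasis ι ℂ H)
    (T : H →L[ℂ] H) (y x : H) :
    ∑ i, ⟪y, T (b i)⟫_ℂ * ⟪b i, x⟫_ℂ = ⟪y, T x⟫_ℂ := by
  simp_rw [← ContinuousLinearMap.adjoint_inner_left T]
  rw [b.sum_inner_mul_inner]

private lemma trace_eq_sum_inner_aux {H : Type*} [NormedAddCommGroup H] [InnerProductSpace ℂ H]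
    [FiniteDimensional ℂ H] {ι : Type*} [Fintype ι] (b : OrthonormalBasis ι ℂ H)
    (T : H →L[ℂ] H) :
    LinearMap.trace ℂ H T.toLinearMap = ∑ i, ⟪b i, T (b i)⟫_ℂ := by
  classical
  rw [LinearMap.trace_eq_matrix_trace ℂ b.toBasis, Matrix.trace]
  simp [Matrix.diag, LinearMap.toMatrix_apply, OrthonormalBasis.coe_toBasis,
    OrthonormalBasis.coe_toBasis_repr_apply, OrthonormalBasis.repr_apply_apply]

private lemma adjoint_eigen_aux {H : Type*} [NormedAddCommGroup H] [InnerProductSpace ℂ H]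
    [FiniteDimensional ℂ H] (W : H →L[ℂ] H) (hW : W ∈ unitary (H →L[ℂ] H))
    {x : H} (hx : ⟪x, x⟫_ℂ = 1) {μ : ℂ} (hWx : W x = μ • x) :
    adjoint W x = (starRingEnd ℂ) μ • x := by
  have h1 : adjoint W (W x) = x := by
    have := hW.1
    rw [star_eq_adjoint] at this
    calc adjoint W (W x) = (adjoint W * W) x := rfl
      _ = x := by rw [this]; rfl
  have hμ : (starRingEnd ℂ) μ * μ = 1 := by
    have h2 : ⟪adjoint W (W x), x⟫_ℂ = ⟪W x, W (x)⟫_ℂ :=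
      ContinuousLinearMap.adjoint_inner_left W x (W x)
    rw [h1, hWx] at h2
    rw [inner_smul_left, inner_smul_right, hx, mul_one] at h2
    rw [← h2]
  have hμ0 : μ ≠ 0 := by
    intro h; rw [h, mul_zero] at hμ; exact one_ne_zero hμ.symm
  have h3 : μ • adjoint W x = x := by
    rw [hWx, map_smul] at h1; exact h1
  have h4 : adjoint W x = μ⁻¹ • x := by
    rw [eq_inv_smul_iff₀ hμ0]; exact h3
  rw [h4, eq_comm, inv_eq_of_mul_eq_one_left hμ]

/-- **First mixed moment of the combined quantum amplitudes equals the OTOC.**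
The sum `∑ conj(μ i₃) * conj(ν k₂) * μ i₂ * ν k₁ * Ã_ρ(i₂,i₃,k₁,k₂)` equals
`Tr(ρ ∘ W(t)† ∘ V† ∘ W(t) ∘ V)` where `W(t) = U† ∘ W ∘ U`. -/
theorem otoc_first_mixed_moment
    {H : Type*} [NormedAddCommGroup H] [InnerProductSpace ℂ H] [FiniteDimensional ℂ H]
    {I K : Type*} [Fintype I] [Fintype K]
    (U W V ρ : H →L[ℂ] H)
    (hU : U ∈ unitary (H →L[ℂ] H))
    (hW : W ∈ unitary (H →L[ℂ] H))
    (hV : V ∈ unitary (H →L[ℂ] H))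
    (e : OrthonormalBasis I ℂ H) (f : OrthonormalBasis K ℂ H)
    (μ : I → ℂ) (ν : K → ℂ)
    (hWe : ∀ i, W (e i) = μ i • e i)
    (hVf : ∀ k, V (f k) = ν k • f k)
    (hρpos : ρ.IsPositive)
    (hρtr : LinearMap.trace ℂ H ρ.toLinearMap = 1) :
    ∑ i₂ : I, ∑ i₃ : I, ∑ k₁ : K, ∑ k₂ : K,
      (starRingEnd ℂ) (μ i₃) * (starRingEnd ℂ) (ν k₂) * μ i₂ * ν k₁ *
        (⟪e i₃, U (f k₂)⟫_ℂ * ⟪f k₂, (adjoint U) (e i₂)⟫_ℂ *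
         ⟪e i₂, U (f k₁)⟫_ℂ * ⟪f k₁, ρ ((adjoint U) (e i₃))⟫_ℂ)
      = LinearMap.trace ℂ H
          ((ρ ∘L adjoint (adjoint U ∘L W ∘L U) ∘L adjoint V ∘L
            (adjoint U ∘L W ∘L U) ∘L V).toLinearMap) := by
  classical
  have hee : ∀ i, ⟪e i, e i⟫_ℂ = 1 := fun i => by
    simpa using orthonormal_iff_ite.mp e.orthonormal i i
  have hff : ∀ k, ⟪f k, f k⟫_ℂ = 1 := fun k => by
    simpa using orthonormal_iff_ite.mp f.orthonormal k k
  have adjW : ∀ i, adjoint W (e i) = (starRingEnd ℂ) (μ i) • e i :=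
    fun i => adjoint_eigen_aux W hW (hee i) (hWe i)
  have adjV : ∀ k, adjoint V (f k) = (starRingEnd ℂ) (ν k) • f k :=
    fun k => adjoint_eigen_aux V hV (hff k) (hVf k)
  have step1 : ∀ (i₂ i₃ : I) (k₁ : K),
      (∑ k₂ : K, (starRingEnd ℂ) (μ i₃) * (starRingEnd ℂ) (ν k₂) * μ i₂ * ν k₁ *
        (⟪e i₃, U (f k₂)⟫_ℂ * ⟪f k₂, (adjoint U) (e i₂)⟫_ℂ *
         ⟪e i₂, U (f k₁)⟫_ℂ * ⟪f k₁, ρ ((adjoint U) (e i₃))⟫_ℂ))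
      = (starRingEnd ℂ) (μ i₃) * μ i₂ * ν k₁ *
          (⟪e i₂, U (f k₁)⟫_ℂ * ⟪f k₁, ρ ((adjoint U) (e i₃))⟫_ℂ) *
          ⟪e i₃, (U ∘L adjoint V) ((adjoint U) (e i₂))⟫_ℂ := by
    intro i₂ i₃ k₁
    rw [← collapse_aux f (U ∘L adjoint V) (e i₃) ((adjoint U) (e i₂)), Finset.mul_sum]
    refine Finset.sum_congr rfl fun k₂ _ => ?_
    simp only [ContinuousLinearMap.comp_apply]
    rw [adjV k₂, map_smul, inner_smul_right]
    ring
  have step2 : ∀ (i₂ i₃ : I),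
      (∑ k₁ : K, (starRingEnd ℂ) (μ i₃) * μ i₂ * ν k₁ *
          (⟪e i₂, U (f k₁)⟫_ℂ * ⟪f k₁, ρ ((adjoint U) (e i₃))⟫_ℂ) *
          ⟪e i₃, (U ∘L adjoint V) ((adjoint U) (e i₂))⟫_ℂ)
      = (starRingEnd ℂ) (μ i₃) * μ i₂ *
          ⟪e i₃, (U ∘L adjoint V) ((adjoint U) (e i₂))⟫_ℂ *
          ⟪e i₂, (U ∘L V) (ρ ((adjoint U) (e i₃)))⟫_ℂ := by
    intro i₂ i₃
    rw [← collapse_aux f (U ∘L V) (e i₂) (ρ ((adjoint U) (e i₃))), Finset.mul_sum]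
    refine Finset.sum_congr rfl fun k₁ _ => ?_
    simp only [ContinuousLinearMap.comp_apply]
    rw [hVf k₁, map_smul, inner_smul_right]
    ring
  have step3 : ∀ i₂ : I,
      (∑ i₃ : I, (starRingEnd ℂ) (μ i₃) * μ i₂ *
          ⟪e i₃, (U ∘L adjoint V) ((adjoint U) (e i₂))⟫_ℂ *
          ⟪e i₂, (U ∘L V) (ρ ((adjoint U) (e i₃)))⟫_ℂ)
      = μ i₂ * ⟪e i₂, (U ∘L V ∘L ρ ∘L adjoint U ∘L adjoint W)
          ((U ∘L adjoint V) ((adjoint U) (e i₂)))⟫_ℂ := by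
    intro i₂
    rw [← collapse_aux e (U ∘L V ∘L ρ ∘L adjoint U ∘L adjoint W) (e i₂)
        ((U ∘L adjoint V) ((adjoint U) (e i₂))), Finset.mul_sum]
    refine Finset.sum_congr rfl fun i₃ _ => ?_
    simp only [ContinuousLinearMap.comp_apply]
    rw [adjW i₃]
    simp only [map_smul, inner_smul_right]
    ring
  have step4 : ∀ i₂ : I,
      μ i₂ * ⟪e i₂, (U ∘L V ∘L ρ ∘L adjoint U ∘L adjoint W)
          ((U ∘L adjoint V) ((adjoint U) (e i₂)))⟫_ℂ
      = ⟪e i₂, ((W ∘L U ∘L V) ∘L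
          (ρ ∘L adjoint U ∘L adjoint W ∘L U ∘L adjoint V ∘L adjoint U)) (e i₂)⟫_ℂ := by
    intro i₂
    simp only [ContinuousLinearMap.comp_apply]
    rw [← ContinuousLinearMap.adjoint_inner_left W, adjW i₂, inner_smul_left,
      Complex.conj_conj]
  calc (∑ i₂ : I, ∑ i₃ : I, ∑ k₁ : K, ∑ k₂ : K,
      (starRingEnd ℂ) (μ i₃) * (starRingEnd ℂ) (ν k₂) * μ i₂ * ν k₁ *
        (⟪e i₃, U (f k₂)⟫_ℂ * ⟪f k₂, (adjoint U) (e i₂)⟫_ℂ *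
         ⟪e i₂, U (f k₁)⟫_ℂ * ⟪f k₁, ρ ((adjoint U) (e i₃))⟫_ℂ))
      = ∑ i₂ : I, ∑ i₃ : I, ∑ k₁ : K,
          (starRingEnd ℂ) (μ i₃) * μ i₂ * ν k₁ *
          (⟪e i₂, U (f k₁)⟫_ℂ * ⟪f k₁, ρ ((adjoint U) (e i₃))⟫_ℂ) *
          ⟪e i₃, (U ∘L adjoint V) ((adjoint U) (e i₂))⟫_ℂ :=
        Finset.sum_congr rfl fun i₂ _ => Finset.sum_congr rfl fun i₃ _ =>
          Finset.sum_congr rfl fun k₁ _ => step1 i₂ i₃ k₁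
    _ = ∑ i₂ : I, ∑ i₃ : I, (starRingEnd ℂ) (μ i₃) * μ i₂ *
          ⟪e i₃, (U ∘L adjoint V) ((adjoint U) (e i₂))⟫_ℂ *
          ⟪e i₂, (U ∘L V) (ρ ((adjoint U) (e i₃)))⟫_ℂ :=
        Finset.sum_congr rfl fun i₂ _ => Finset.sum_congr rfl fun i₃ _ => step2 i₂ i₃
    _ = ∑ i₂ : I, μ i₂ * ⟪e i₂, (U ∘L V ∘L ρ ∘L adjoint U ∘L adjoint W)
          ((U ∘L adjoint V) ((adjoint U) (e i₂)))⟫_ℂ :=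
        Finset.sum_congr rfl fun i₂ _ => step3 i₂
    _ = ∑ i₂ : I, ⟪e i₂, ((W ∘L U ∘L V) ∘L
          (ρ ∘L adjoint U ∘L adjoint W ∘L U ∘L adjoint V ∘L adjoint U)) (e i₂)⟫_ℂ :=
        Finset.sum_congr rfl fun i₂ _ => step4 i₂
    _ = LinearMap.trace ℂ H (((W ∘L U ∘L V) ∘L
          (ρ ∘L adjoint U ∘L adjoint W ∘L U ∘L adjoint V ∘L adjoint U)).toLinearMap) :=
        (trace_eq_sum_inner_aux e _).symm
    _ = LinearMap.trace ℂ H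
          ((ρ ∘L adjoint (adjoint U ∘L W ∘L U) ∘L adjoint V ∘L
            (adjoint U ∘L W ∘L U) ∘L V).toLinearMap) := by
        have hcyc : LinearMap.trace ℂ H (((W ∘L U ∘L V) ∘L
            (ρ ∘L adjoint U ∘L adjoint W ∘L U ∘L adjoint V ∘L adjoint U)).toLinearMap)
            = LinearMap.trace ℂ H
              (((ρ ∘L adjoint U ∘L adjoint W ∘L U ∘L adjoint V ∘L adjoint U) ∘L
                (W ∘L U ∘L V)).toLinearMap) := by
          rw [ContinuousLinearMap.toLinearMap_comp, ContinuousLinearMap.toLinearMap_comp,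
            ← Module.End.mul_eq_comp, ← Module.End.mul_eq_comp, LinearMap.trace_mul_comm]
          rfl
        rw [hcyc]
        congr 2
        ext x
        simp [ContinuousLinearMap.comp_apply, ContinuousLinearMap.adjoint_comp,
          ContinuousLinearMap.adjoint_adjoint]
end

section
/- Let H be a finite-dimensional complex inner product space, let U, W, V be unitary operators on H, let {e_i} be an orthonormal eigenbasis of W and {f_k} an orthonormal eigenbasis of V, and let ρ be a density operator on H. Then for every fixed index i₂, marginalizing the combined quantum amplitude over all other indices yields a probability: Σ_{i₃,k₁,k₂} Ã_ρ(i₂,i₃,k₁,k₂) = ⟨e_{i₂}, (U ∘ ρ ∘ U†) e_{i₂}⟩, which is a real number lying in the interval [0, 1]. -/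
open scoped InnerProductSpace ComplexConjugate
open ContinuousLinearMap

/-- **Marginalizing `Ã_ρ` over all indices except `i₂` yields a probability:**
`∑_{i₃,k₁,k₂} Ã_ρ(i₂,i₃,k₁,k₂) = ⟨e_{i₂}, (U ∘ ρ ∘ U†) e_{i₂}⟩`,
a real number in `[0,1]`. -/
theorem combined_amplitude_marginal_i₂
    {H : Type*} [NormedAddCommGroup H] [InnerProductSpace ℂ H] [FiniteDimensional ℂ H]
    {I K : Type*} [Fintype I] [Fintype K]
    (U W V ρ : H →L[ℂ] H)
    (hU : U ∈ unitary (H →L[ℂ] H))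
    (hW : W ∈ unitary (H →L[ℂ] H))
    (hV : V ∈ unitary (H →L[ℂ] H))
    (e : OrthonormalBasis I ℂ H) (f : OrthonormalBasis K ℂ H)
    (hWe : ∀ i, ∃ c : ℂ, W (e i) = c • e i)
    (hVf : ∀ k, ∃ c : ℂ, V (f k) = c • f k)
    (hρpos : ρ.IsPositive)
    (hρtr : LinearMap.trace ℂ H ρ.toLinearMap = 1)
    (i₂ : I) :
    (∑ i₃ : I, ∑ k₁ : K, ∑ k₂ : K,
      ⟪e i₃, U (f k₂)⟫_ℂ * ⟪f k₂, (adjoint U) (e i₂)⟫_ℂ *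
        ⟪e i₂, U (f k₁)⟫_ℂ * ⟪f k₁, ρ ((adjoint U) (e i₃))⟫_ℂ
      = ⟪e i₂, (U ∘L ρ ∘L adjoint U) (e i₂)⟫_ℂ)
    ∧ (⟪e i₂, (U ∘L ρ ∘L adjoint U) (e i₂)⟫_ℂ).im = 0
    ∧ (⟪e i₂, (U ∘L ρ ∘L adjoint U) (e i₂)⟫_ℂ).re ∈ Set.Icc (0 : ℝ) 1 := by
  classical
  have hTpos : (U ∘L ρ ∘L adjoint U).IsPositive := hρpos.conj_adjoint U
  -- unitarity facts
  have hUU : ∀ x : H, U (adjoint U x) = x := by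
    intro x
    have h := (Unitary.mem_iff.mp hU).2
    rw [star_eq_adjoint] at h
    have := congrArg (fun A : H →L[ℂ] H => A x) h
    simpa using this
  -- resolution of the identity sums
  have key : ∀ x y : H, (∑ k, ⟪x, U (f k)⟫_ℂ * ⟪f k, y⟫_ℂ) = ⟪x, U y⟫_ℂ := by
    intro x y
    simpa only [adjoint_inner_left] using f.sum_inner_mul_inner (adjoint U x) y
  have heq : (∑ i₃ : I, ∑ k₁ : K, ∑ k₂ : K,
      ⟪e i₃, U (f k₂)⟫_ℂ * ⟪f k₂, (adjoint U) (e i₂)⟫_ℂ *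
        ⟪e i₂, U (f k₁)⟫_ℂ * ⟪f k₁, ρ ((adjoint U) (e i₃))⟫_ℂ
      = ⟪e i₂, (U ∘L ρ ∘L adjoint U) (e i₂)⟫_ℂ) := by
    have step : ∀ i₃ : I, (∑ k₁ : K, ∑ k₂ : K,
        ⟪e i₃, U (f k₂)⟫_ℂ * ⟪f k₂, (adjoint U) (e i₂)⟫_ℂ *
          ⟪e i₂, U (f k₁)⟫_ℂ * ⟪f k₁, ρ ((adjoint U) (e i₃))⟫_ℂ)
        = ⟪e i₃, e i₂⟫_ℂ * ⟪e i₂, (U ∘L ρ ∘L adjoint U) (e i₃)⟫_ℂ := by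
      intro i₃
      have h1 : (∑ k₁ : K, ∑ k₂ : K,
          ⟪e i₃, U (f k₂)⟫_ℂ * ⟪f k₂, (adjoint U) (e i₂)⟫_ℂ *
            ⟪e i₂, U (f k₁)⟫_ℂ * ⟪f k₁, ρ ((adjoint U) (e i₃))⟫_ℂ)
          = ∑ k₁ : K, (∑ k₂ : K, ⟪e i₃, U (f k₂)⟫_ℂ * ⟪f k₂, (adjoint U) (e i₂)⟫_ℂ) *
              (⟪e i₂, U (f k₁)⟫_ℂ * ⟪f k₁, ρ ((adjoint U) (e i₃))⟫_ℂ) := by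
        refine Finset.sum_congr rfl fun k₁ _ => ?_
        rw [Finset.sum_mul]
        exact Finset.sum_congr rfl fun k₂ _ => by ring
      rw [h1, ← Finset.mul_sum, key, key, hUU]
      simp
    rw [Finset.sum_congr rfl fun i₃ _ => step i₃]
    have horth := orthonormal_iff_ite.mp e.orthonormal
    simp only [horth]
    simp
  have hadj : adjoint (U ∘L ρ ∘L adjoint U) = U ∘L ρ ∘L adjoint U :=
    isSelfAdjoint_iff'.mp hTpos.isSelfAdjoint
  refine ⟨heq, ?_, ?_, ?_⟩
  · have h1 : conj ⟪e i₂, (U ∘L ρ ∘L adjoint U) (e i₂)⟫_ℂ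
        = ⟪e i₂, (U ∘L ρ ∘L adjoint U) (e i₂)⟫_ℂ := by
      rw [inner_conj_symm]
      conv_lhs => rw [← hadj]
      rw [adjoint_inner_left]
    have h2 := congrArg Complex.im h1
    simp only [Complex.conj_im] at h2
    linarith
  · have h := hTpos.inner_nonneg_right (e i₂)
    simpa using (Complex.le_def.mp h).1
  · -- trace bound
    have htrT : LinearMap.trace ℂ H (U ∘L ρ ∘L adjoint U).toLinearMap = 1 := by
      have hcomp : (U ∘L ρ ∘L adjoint U).toLinearMap
          = U.toLinearMap * (ρ.toLinearMap * (adjoint U).toLinearMap) := rfl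
      rw [hcomp, LinearMap.trace_mul_comm, mul_assoc]
      have hU'U : (adjoint U).toLinearMap * U.toLinearMap = LinearMap.id := by
        apply LinearMap.ext; intro x
        have h := (Unitary.mem_iff.mp hU).1
        rw [star_eq_adjoint] at h
        have := congrArg (fun A : H →L[ℂ] H => A x) h
        simpa using this
      rw [hU'U]
      exact hρtr
    have htrsum : LinearMap.trace ℂ H (U ∘L ρ ∘L adjoint U).toLinearMap
        = ∑ i, ⟪e i, (U ∘L ρ ∘L adjoint U) (e i)⟫_ℂ := by
      rw [LinearMap.trace_eq_matrix_trace ℂ e.toBasis, Matrix.trace]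
      congr 1
      ext i
      rw [Matrix.diag, LinearMap.toMatrix_apply, e.coe_toBasis_repr_apply,
        e.repr_apply_apply, e.coe_toBasis]
      rfl
    have hsum : (∑ i, (⟪e i, (U ∘L ρ ∘L adjoint U) (e i)⟫_ℂ).re) = 1 := by
      have h3 := congrArg Complex.re (htrsum.symm.trans htrT)
      simpa [Complex.re_sum] using h3
    have hle : (⟪e i₂, (U ∘L ρ ∘L adjoint U) (e i₂)⟫_ℂ).re
        ≤ ∑ i, (⟪e i, (U ∘L ρ ∘L adjoint U) (e i)⟫_ℂ).re := by
      apply Finset.single_le_sum (f := fun i => (⟪e i, (U ∘L ρ ∘L adjoint U) (e i)⟫_ℂ).re)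
      · intro i _
        simpa using (Complex.le_def.mp (hTpos.inner_nonneg_right (e i))).1
      · exact Finset.mem_univ i₂
    rw [hsum] at hle
    exact hle
end

section
/- Let H be a finite-dimensional complex inner product space, let U, W, V be unitary operators on H, let {e_i} be an orthonormal eigenbasis of W and {f_k} an orthonormal eigenbasis of V, and let ρ be a density operator on H. Then for every fixed index k₁, marginalizing the combined quantum amplitude over all other indices yields a probability: Σ_{i₂,i₃,k₂} Ã_ρ(i₂,i₃,k₁,k₂) = ⟨f_{k₁}, ρ f_{k₁}⟩, which is a real number lying in the interval [0, 1]. -/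
open scoped InnerProductSpace
open ContinuousLinearMap

/-- **Marginalizing `Ã_ρ` over all indices except `k₁` yields a probability:**
`∑_{i₂,i₃,k₂} Ã_ρ(i₂,i₃,k₁,k₂) = ⟨f_{k₁}, ρ f_{k₁}⟩`, a real number in `[0,1]`. -/
theorem combined_amplitude_marginal_k₁
    {H : Type*} [NormedAddCommGroup H] [InnerProductSpace ℂ H] [FiniteDimensional ℂ H]
    {I K : Type*} [Fintype I] [Fintype K]
    (U W V ρ : H →L[ℂ] H)
    (hU : U ∈ unitary (H →L[ℂ] H))
    (hW : W ∈ unitary (H →L[ℂ] H))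
    (hV : V ∈ unitary (H →L[ℂ] H))
    (e : OrthonormalBasis I ℂ H) (f : OrthonormalBasis K ℂ H)
    (hWe : ∀ i, ∃ c : ℂ, W (e i) = c • e i)
    (hVf : ∀ k, ∃ c : ℂ, V (f k) = c • f k)
    (hρpos : ρ.IsPositive)
    (hρtr : LinearMap.trace ℂ H ρ.toLinearMap = 1)
    (k₁ : K) :
    (∑ i₂ : I, ∑ i₃ : I, ∑ k₂ : K,
      ⟪e i₃, U (f k₂)⟫_ℂ * ⟪f k₂, (adjoint U) (e i₂)⟫_ℂ *
        ⟪e i₂, U (f k₁)⟫_ℂ * ⟪f k₁, ρ ((adjoint U) (e i₃))⟫_ℂ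
      = ⟪f k₁, ρ (f k₁)⟫_ℂ)
    ∧ (⟪f k₁, ρ (f k₁)⟫_ℂ).im = 0
    ∧ (⟪f k₁, ρ (f k₁)⟫_ℂ).re ∈ Set.Icc (0 : ℝ) 1 := by
  classical
  have hUaU : ∀ x : H, adjoint U (U x) = x := by
    intro x
    have h : (adjoint U).comp U = 1 := by
      rw [← star_eq_adjoint]; exact hU.1
    calc adjoint U (U x) = ((adjoint U).comp U) x := rfl
      _ = x := by rw [h]; rfl
  have hUUa : ∀ x : H, U (adjoint U x) = x := by
    intro x
    have h : U.comp (adjoint U) = 1 := by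
      rw [← star_eq_adjoint]; exact hU.2
    calc U (adjoint U x) = (U.comp (adjoint U)) x := rfl
      _ = x := by rw [h]; rfl
  -- the main sum computation
  have hsum : (∑ i₂ : I, ∑ i₃ : I, ∑ k₂ : K,
      ⟪e i₃, U (f k₂)⟫_ℂ * ⟪f k₂, (adjoint U) (e i₂)⟫_ℂ *
        ⟪e i₂, U (f k₁)⟫_ℂ * ⟪f k₁, ρ ((adjoint U) (e i₃))⟫_ℂ)
      = ⟪f k₁, ρ (f k₁)⟫_ℂ := by
    have step1 : ∀ i₂ i₃ : I,
        (∑ k₂ : K, ⟪e i₃, U (f k₂)⟫_ℂ * ⟪f k₂, (adjoint U) (e i₂)⟫_ℂ)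
          = ⟪e i₃, e i₂⟫_ℂ := by
      intro i₂ i₃
      have : ∀ k₂ : K, ⟪e i₃, U (f k₂)⟫_ℂ = ⟪adjoint U (e i₃), f k₂⟫_ℂ := fun k₂ => by
        rw [adjoint_inner_left]
      simp_rw [this]
      rw [f.sum_inner_mul_inner]
      rw [adjoint_inner_left, hUUa]
    calc (∑ i₂ : I, ∑ i₃ : I, ∑ k₂ : K,
        ⟪e i₃, U (f k₂)⟫_ℂ * ⟪f k₂, (adjoint U) (e i₂)⟫_ℂ *
          ⟪e i₂, U (f k₁)⟫_ℂ * ⟪f k₁, ρ ((adjoint U) (e i₃))⟫_ℂ)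
        = ∑ i₂ : I, ∑ i₃ : I,
            (∑ k₂ : K, ⟪e i₃, U (f k₂)⟫_ℂ * ⟪f k₂, (adjoint U) (e i₂)⟫_ℂ) *
              (⟪e i₂, U (f k₁)⟫_ℂ * ⟪f k₁, ρ ((adjoint U) (e i₃))⟫_ℂ) := by
          refine Finset.sum_congr rfl fun i₂ _ => Finset.sum_congr rfl fun i₃ _ => ?_
          rw [Finset.sum_mul]
          exact Finset.sum_congr rfl fun k₂ _ => by ring
      _ = ∑ i₂ : I, ∑ i₃ : I, ⟪e i₃, e i₂⟫_ℂ *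
              (⟪e i₂, U (f k₁)⟫_ℂ * ⟪f k₁, ρ ((adjoint U) (e i₃))⟫_ℂ) := by
          refine Finset.sum_congr rfl fun i₂ _ => Finset.sum_congr rfl fun i₃ _ => ?_
          rw [step1]
      _ = ∑ i₂ : I, ⟪e i₂, U (f k₁)⟫_ℂ * ⟪f k₁, ρ ((adjoint U) (e i₂))⟫_ℂ := by
          refine Finset.sum_congr rfl fun i₂ _ => ?_
          have horth : ∀ i₃ : I, ⟪e i₃, e i₂⟫_ℂ = if i₃ = i₂ then 1 else 0 := fun i₃ =>
            (orthonormal_iff_ite.mp e.orthonormal i₃ i₂)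
          simp_rw [horth, ite_mul, one_mul, zero_mul]
          rw [Finset.sum_ite_eq' Finset.univ i₂
            (fun i₃ => ⟪e i₂, U (f k₁)⟫_ℂ * ⟪f k₁, ρ ((adjoint U) (e i₃))⟫_ℂ)]
          simp
      _ = ⟪f k₁, ρ (f k₁)⟫_ℂ := by
          have hterm : ∀ i₂ : I, ⟪f k₁, ρ ((adjoint U) (e i₂))⟫_ℂ
              = ⟪U ((adjoint ρ) (f k₁)), e i₂⟫_ℂ := fun i₂ => by
            rw [← adjoint_inner_left, adjoint_inner_right]
          simp_rw [hterm]
          rw [Finset.sum_congr rfl fun i _ => mul_comm _ _, e.sum_inner_mul_inner]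
          rw [← adjoint_inner_left U, hUaU, adjoint_inner_left]
  refine ⟨hsum, ?_, ?_, ?_⟩
  · -- imaginary part is zero, by self-adjointness
    have hsa := hρpos.1
    have h : (starRingEnd ℂ) ⟪f k₁, ρ (f k₁)⟫_ℂ = ⟪f k₁, ρ (f k₁)⟫_ℂ := by
      rw [inner_conj_symm, ← adjoint_inner_left, hρpos.isSelfAdjoint.adjoint_eq]
    exact Complex.conj_eq_iff_im.mp h
  · exact hρpos.re_inner_nonneg_right (f k₁)
  · -- bounded by 1 via trace
    have htr : LinearMap.trace ℂ H ρ.toLinearMap = ∑ k : K, ⟪f k, ρ (f k)⟫_ℂ := by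
      rw [LinearMap.trace_eq_matrix_trace ℂ f.toBasis, Matrix.trace]
      refine Finset.sum_congr rfl fun k _ => ?_
      rw [Matrix.diag_apply, LinearMap.toMatrix_apply, f.coe_toBasis_repr_apply,
        f.repr_apply_apply, f.coe_toBasis]
      rfl
    have h1 : (1 : ℝ) = ∑ k : K, (⟪f k, ρ (f k)⟫_ℂ).re := by
      have := congrArg Complex.re (hρtr.symm.trans htr)
      simpa [Complex.re_sum] using this
    rw [h1]
    exact Finset.single_le_sum (fun k _ => hρpos.re_inner_nonneg_right (f k))
      (Finset.mem_univ k₁)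
end

section
/- Let H be a finite-dimensional complex inner product space, let U, W, V be unitary operators on H, let {e_i} be an orthonormal eigenbasis of W and {f_k} an orthonormal eigenbasis of V, and let ρ be a density operator on H. Then for every fixed index k₂, marginalizing the combined quantum amplitude over all other indices yields a probability: Σ_{i₂,i₃,k₁} Ã_ρ(i₂,i₃,k₁,k₂) = ⟨f_{k₂}, ρ f_{k₂}⟩, which is a real number lying in the interval [0, 1]. -/
open scoped InnerProductSpace
open ContinuousLinearMap

/-- **Marginalizing `Ã_ρ` over all indices except `k₂` yields a probability:**
`∑_{i₂,i₃,k₁} Ã_ρ(i₂,i₃,k₁,k₂) = ⟨f_{k₂}, ρ f_{k₂}⟩`, a real number in `[0,1]`. -/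
theorem combined_amplitude_marginal_k₂
    {H : Type*} [NormedAddCommGroup H] [InnerProductSpace ℂ H] [FiniteDimensional ℂ H]
    {I K : Type*} [Fintype I] [Fintype K]
    (U W V ρ : H →L[ℂ] H)
    (hU : U ∈ unitary (H →L[ℂ] H))
    (hW : W ∈ unitary (H →L[ℂ] H))
    (hV : V ∈ unitary (H →L[ℂ] H))
    (e : OrthonormalBasis I ℂ H) (f : OrthonormalBasis K ℂ H)
    (hWe : ∀ i, ∃ c : ℂ, W (e i) = c • e i)
    (hVf : ∀ k, ∃ c : ℂ, V (f k) = c • f k)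
    (hρpos : ρ.IsPositive)
    (hρtr : LinearMap.trace ℂ H ρ.toLinearMap = 1)
    (k₂ : K) :
    (∑ i₂ : I, ∑ i₃ : I, ∑ k₁ : K,
      ⟪e i₃, U (f k₂)⟫_ℂ * ⟪f k₂, (adjoint U) (e i₂)⟫_ℂ *
        ⟪e i₂, U (f k₁)⟫_ℂ * ⟪f k₁, ρ ((adjoint U) (e i₃))⟫_ℂ
      = ⟪f k₂, ρ (f k₂)⟫_ℂ)
    ∧ (⟪f k₂, ρ (f k₂)⟫_ℂ).im = 0
    ∧ (⟪f k₂, ρ (f k₂)⟫_ℂ).re ∈ Set.Icc (0 : ℝ) 1 := by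
  classical
  have hsa : IsSelfAdjoint ρ := hρpos.isSelfAdjoint
  have hρadj : adjoint ρ = ρ := hsa
  have hUadj : adjoint (adjoint U) = U := adjoint_adjoint U
  have hUaU : ∀ x : H, adjoint U (U x) = x := by
    intro x
    have h := hU.1
    have : (adjoint U * U) x = (1 : H →L[ℂ] H) x := by
      rw [show (adjoint U) * U = star U * U from rfl, h]
    simpa using this
  -- real and nonneg
  have him : (⟪f k₂, ρ (f k₂)⟫_ℂ).im = 0 := by
    have h2 : (starRingEnd ℂ) ⟪f k₂, ρ (f k₂)⟫_ℂ = ⟪f k₂, ρ (f k₂)⟫_ℂ := by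
      rw [inner_conj_symm]
      conv_lhs => rw [← hρadj]
      rw [ContinuousLinearMap.adjoint_inner_left]
    exact Complex.conj_eq_iff_im.mp h2
  have hnonneg : 0 ≤ (⟪f k₂, ρ (f k₂)⟫_ℂ).re := (Complex.nonneg_iff.mp (hρpos.inner_nonneg_right (f k₂))).1
  -- trace as sum of diagonal inner products
  have htr : ∑ k : K, ⟪f k, ρ (f k)⟫_ℂ = 1 := by
    have := LinearMap.trace_eq_matrix_trace ℂ f.toBasis ρ.toLinearMap
    rw [this] at hρtr
    rw [← hρtr]
    rw [Matrix.trace]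
    apply Finset.sum_congr rfl
    intro k _
    simp [Matrix.diag, LinearMap.toMatrix_apply, f.coe_toBasis, f.coe_toBasis_repr_apply,
      f.repr_apply_apply]
  have hle : (⟪f k₂, ρ (f k₂)⟫_ℂ).re ≤ 1 := by
    have h1 : ∑ k : K, (⟪f k, ρ (f k)⟫_ℂ).re = 1 := by
      have := congrArg Complex.re htr
      simpa [Complex.re_sum] using this
    have h2 : ∀ k ∈ Finset.univ, 0 ≤ (⟪f k, ρ (f k)⟫_ℂ).re := fun k _ =>
      (Complex.nonneg_iff.mp (hρpos.inner_nonneg_right (f k))).1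
    calc (⟪f k₂, ρ (f k₂)⟫_ℂ).re ≤ ∑ k : K, (⟪f k, ρ (f k)⟫_ℂ).re :=
          Finset.single_le_sum h2 (Finset.mem_univ k₂)
      _ = 1 := h1
  refine ⟨?_, him, hnonneg, hle⟩
  -- the main sum
  have h1 : ∀ i₂ i₃ : I, ∑ k₁ : K, ⟪e i₂, U (f k₁)⟫_ℂ * ⟪f k₁, ρ ((adjoint U) (e i₃))⟫_ℂ
      = ⟪e i₂, (U * ρ * adjoint U) (e i₃)⟫_ℂ := by
    intro i₂ i₃
    have := f.sum_inner_mul_inner (adjoint U (e i₂)) (ρ ((adjoint U) (e i₃)))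
    simp only [ContinuousLinearMap.adjoint_inner_left] at this
    rw [this]
    simp [ContinuousLinearMap.adjoint_inner_left, mul_apply]
  calc ∑ i₂ : I, ∑ i₃ : I, ∑ k₁ : K,
      ⟪e i₃, U (f k₂)⟫_ℂ * ⟪f k₂, (adjoint U) (e i₂)⟫_ℂ *
        ⟪e i₂, U (f k₁)⟫_ℂ * ⟪f k₁, ρ ((adjoint U) (e i₃))⟫_ℂ
      = ∑ i₃ : I, ⟪e i₃, U (f k₂)⟫_ℂ *
          ∑ i₂ : I, ⟪f k₂, (adjoint U) (e i₂)⟫_ℂ * ⟪e i₂, (U * ρ * adjoint U) (e i₃)⟫_ℂ := by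
        rw [Finset.sum_comm]
        refine Finset.sum_congr rfl fun i₃ _ => ?_
        rw [Finset.mul_sum]
        refine Finset.sum_congr rfl fun i₂ _ => ?_
        rw [← h1 i₂ i₃, Finset.mul_sum, Finset.mul_sum]
        refine Finset.sum_congr rfl fun k₁ _ => ?_
        ring
    _ = ∑ i₃ : I, ⟪e i₃, U (f k₂)⟫_ℂ * ⟪U (f k₂), (U * ρ * adjoint U) (e i₃)⟫_ℂ := by
        apply Finset.sum_congr rfl
        intro i₃ _
        congr 1
        have := e.sum_inner_mul_inner (U (f k₂)) ((U * ρ * adjoint U) (e i₃))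
        rw [← this]
        apply Finset.sum_congr rfl
        intro i₂ _
        congr 1
        rw [← ContinuousLinearMap.adjoint_inner_left, hUadj]
    _ = ∑ i₃ : I, ⟪U (f k₂), (U * ρ * adjoint U) (e i₃)⟫_ℂ * ⟪e i₃, U (f k₂)⟫_ℂ := by
        apply Finset.sum_congr rfl; intro i₃ _; ring
    _ = ⟪(U * ρ * adjoint U) (U (f k₂)), U (f k₂)⟫_ℂ := by
        have hMsa : adjoint (U * ρ * adjoint U) = U * ρ * adjoint U := by
          show star _ = _
          simp [star_mul, hsa.star_eq, mul_assoc, ← ContinuousLinearMap.star_eq_adjoint]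
        have := e.sum_inner_mul_inner ((U * ρ * adjoint U) (U (f k₂))) (U (f k₂))
        rw [← this]
        apply Finset.sum_congr rfl
        intro i₃ _
        congr 1
        conv_lhs => rw [← hMsa]
        rw [ContinuousLinearMap.adjoint_inner_right]
    _ = ⟪f k₂, ρ (f k₂)⟫_ℂ := by
        have : (U * ρ * adjoint U) (U (f k₂)) = U (ρ (f k₂)) := by
          simp [mul_apply, hUaU]
        rw [this, ← ContinuousLinearMap.adjoint_inner_right U, hUaU]
        conv_lhs => rw [← hρadj]
        rw [ContinuousLinearMap.adjoint_inner_left]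
end

section
/- Let H be a finite-dimensional complex inner product space, let U, W, V be unitary operators on H, let {e_i} be an orthonormal eigenbasis of W and {f_k} an orthonormal eigenbasis of V, and suppose the density operator ρ satisfies ρ (U† e_i) = q_i • (U† e_i) for every i, with q_i ≥ 0 and Σ_i q_i = 1. Then, when the two W-indices coincide (i₃ = i₂), the combined quantum amplitude reduces to a product of probabilities: Ã_ρ(i₂,i₂,k₁,k₂) = |⟨f_{k₂}, U† e_{i₂}⟩|² · |⟨f_{k₁}, U† e_{i₂}⟩|² · q_{i₂}. In particular, Ã_ρ(i₂,i₂,k₁,k₂) is a nonnegative real number. -/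
open scoped InnerProductSpace
open ContinuousLinearMap

/-- **Reduction of `Ã_ρ` to a product of probabilities when the `W`-indices coincide:**
if `ρ (U† e_i) = q_i • (U† e_i)` with `q_i ≥ 0`, `∑ q_i = 1`, then
`Ã_ρ(i₂,i₂,k₁,k₂) = |⟨f_{k₂},U† e_{i₂}⟩|² |⟨f_{k₁},U† e_{i₂}⟩|² q_{i₂}`,
a nonnegative real number. -/
theorem combined_amplitude_reduces_to_probability_W
    {H : Type*} [NormedAddCommGroup H] [InnerProductSpace ℂ H] [FiniteDimensional ℂ H]
    {I K : Type*} [Fintype I] [Fintype K]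
    (U W V ρ : H →L[ℂ] H)
    (hU : U ∈ unitary (H →L[ℂ] H))
    (hW : W ∈ unitary (H →L[ℂ] H))
    (hV : V ∈ unitary (H →L[ℂ] H))
    (e : OrthonormalBasis I ℂ H) (f : OrthonormalBasis K ℂ H)
    (hWe : ∀ i, ∃ c : ℂ, W (e i) = c • e i)
    (hVf : ∀ k, ∃ c : ℂ, V (f k) = c • f k)
    (hρpos : ρ.IsPositive)
    (hρtr : LinearMap.trace ℂ H ρ.toLinearMap = 1)
    (q : I → ℝ) (hq : ∀ i, 0 ≤ q i) (hqsum : ∑ i : I, q i = 1)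
    (hρdiag : ∀ i, ρ ((adjoint U) (e i)) = (q i : ℂ) • ((adjoint U) (e i)))
    (i₂ : I) (k₁ k₂ : K) :
    (⟪e i₂, U (f k₂)⟫_ℂ * ⟪f k₂, (adjoint U) (e i₂)⟫_ℂ *
       ⟪e i₂, U (f k₁)⟫_ℂ * ⟪f k₁, ρ ((adjoint U) (e i₂))⟫_ℂ
      = ((‖⟪f k₂, (adjoint U) (e i₂)⟫_ℂ‖ : ℝ) ^ 2 *
         (‖⟪f k₁, (adjoint U) (e i₂)⟫_ℂ‖ : ℝ) ^ 2 * q i₂ : ℝ))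
    ∧ (⟪e i₂, U (f k₂)⟫_ℂ * ⟪f k₂, (adjoint U) (e i₂)⟫_ℂ *
       ⟪e i₂, U (f k₁)⟫_ℂ * ⟪f k₁, ρ ((adjoint U) (e i₂))⟫_ℂ).im = 0
    ∧ 0 ≤ (⟪e i₂, U (f k₂)⟫_ℂ * ⟪f k₂, (adjoint U) (e i₂)⟫_ℂ *
       ⟪e i₂, U (f k₁)⟫_ℂ * ⟪f k₁, ρ ((adjoint U) (e i₂))⟫_ℂ).re := by
  have key : ∀ k, ⟪e i₂, U (f k)⟫_ℂ = starRingEnd ℂ ⟪f k, (adjoint U) (e i₂)⟫_ℂ := by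
    intro k
    rw [← ContinuousLinearMap.adjoint_inner_left U (f k) (e i₂), ← inner_conj_symm]
  have hmain : ⟪e i₂, U (f k₂)⟫_ℂ * ⟪f k₂, (adjoint U) (e i₂)⟫_ℂ *
       ⟪e i₂, U (f k₁)⟫_ℂ * ⟪f k₁, ρ ((adjoint U) (e i₂))⟫_ℂ
      = ((‖⟪f k₂, (adjoint U) (e i₂)⟫_ℂ‖ : ℝ) ^ 2 *
         (‖⟪f k₁, (adjoint U) (e i₂)⟫_ℂ‖ : ℝ) ^ 2 * q i₂ : ℝ) := by
    rw [key k₂, key k₁, hρdiag i₂, inner_smul_right]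
    set a := ⟪f k₂, (adjoint U) (e i₂)⟫_ℂ
    set b := ⟪f k₁, (adjoint U) (e i₂)⟫_ℂ
    have ha : starRingEnd ℂ a * a = ((‖a‖ : ℝ) ^ 2 : ℝ) := by
      rw [mul_comm, Complex.mul_conj, Complex.normSq_eq_norm_sq]
    have hb : starRingEnd ℂ b * b = ((‖b‖ : ℝ) ^ 2 : ℝ) := by
      rw [mul_comm, Complex.mul_conj, Complex.normSq_eq_norm_sq]
    calc starRingEnd ℂ a * a * (starRingEnd ℂ b) * ((q i₂ : ℂ) * b)
        = (starRingEnd ℂ a * a) * (starRingEnd ℂ b * b) * (q i₂ : ℂ) := by ring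
      _ = _ := by rw [ha, hb]; push_cast; ring
  refine ⟨hmain, ?_, ?_⟩
  · rw [hmain]; exact Complex.ofReal_im _
  · rw [hmain, Complex.ofReal_re]
    exact mul_nonneg (by positivity) (hq i₂)
end
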